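/- Let D be a ring and M a left D-module of finite type. Given any filtered ring structure (D, D_i) with exhaustive filtration and 1 ∈ D_0, M admits a good filtration: there exists a filtration (M_i)_{i∈ℤ} making (M, M_i) a filtered (D, D_i)-module together with a strict surjective filtered morphism φ : (L, L_i) → (M, M_i) with φ(L_i) = M_i, where (L, L_i) is a free filtered (D, D_i)-module of finite type. -/

import Mathlib

/-- The `i`-th step of the filtration of a filt free filtered `(D, Dᵢ)`-module of finite type,
a finite direct sum of twists `D(n k)` (where `D(n)ᵢ = D_{i+n}`). -/
def freeFilt {D : Type*} [Ring D] (FD : ℤ → AddSubgroup D) {s : ℕ} (n : Fin s → ℤ)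
    (i : ℤ) : AddSubgroup (Fin s → D) where
  carrier := {x | ∀ k, x k ∈ FD (i + n k)}
  zero_mem' := fun k => (FD _).zero_mem
  add_mem' := fun hx hy k => (FD _).add_mem (hx k) (hy k)
  neg_mem' := fun hx k => (FD _).neg_mem (hx k)

/-- Any `D`-module of finite type admits a good filtration: a filtration which is the image
filtration under a strict surjective filtered morphism from a free filtered `(D, Dᵢ)`-module
of finite type. -/
theorem stmt_13 {D M : Type*} [Ring D] [AddCommGroup M] [Module D M]
    (FD : ℤ → AddSubgroup D) (hFDmono : Monotone FD)
    (hFDone : (1 : D) ∈ FD 0)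
    (hFDmul : ∀ i j : ℤ, ∀ a ∈ FD i, ∀ b ∈ FD j, a * b ∈ FD (i + j))
    (hFDexh : ∀ a : D, ∃ i, a ∈ FD i)
    [Module.Finite D M] :
    ∃ (s : ℕ) (n : Fin s → ℤ) (FM : ℤ → AddSubgroup M) (φ : (Fin s → D) →ₗ[D] M),
      Monotone FM ∧
      (∀ i j : ℤ, ∀ a ∈ FD i, ∀ x ∈ FM j, a • x ∈ FM (i + j)) ∧
      Function.Surjective φ ∧
      ∀ i : ℤ, FM i = (freeFilt FD n i).map φ.toAddMonoidHom := by
  obtain ⟨s, f, hf⟩ := Module.Finite.exists_fin (R := D) (M := M)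
  set φ : (Fin s → D) →ₗ[D] M := Fintype.linearCombination D f
  have hsurj : Function.Surjective φ := by
    rw [← LinearMap.range_eq_top, Fintype.range_linearCombination, hf]
  refine ⟨s, fun _ => 0, fun i => (freeFilt FD (fun _ => 0) i).map φ.toAddMonoidHom, φ,
    ?_, ?_, hsurj, fun _ => rfl⟩
  · intro i j hij
    refine AddSubgroup.map_mono fun x hx k => hFDmono ?_ (hx k)
    omega
  · rintro i j a ha x ⟨y, hy, rfl⟩
    refine ⟨a • y, fun k => ?_, (φ.map_smul a y)⟩
    have := hFDmul i (j + 0) a ha (y k) (hy k)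
    simpa [add_assoc] using this
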